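/- Let G be a locally compact group and K, L ⊆ G two compact totally disconnected subgroups each of whose normalizer N(K), N(L) is open in G with N(K)/K and N(L)/L Lie groups (i.e., K and L are basic compact subgroups of a moderate group). Then K and L are commensurable: K ∩ L has finite index in both K and L. -/

import Mathlib

open scoped Manifold Topology
open Set Filter

theorem LieGroup.exists_nhds_pow_two_pow {E H Q : Type*} [NormedAddCommGroup E]
    [NormedSpace ℝ E] [TopologicalSpace H] (I : ModelWithCorners ℝ E H) [TopologicalSpace Q]
    [ChartedSpace H Q] [Group Q] [LieGroup I (⊤ : ℕ∞) Q] :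
    ∃ V ∈ 𝓝 (1 : Q), ∀ x : Q, (∀ n : ℕ, x ^ (2 ^ n) ∈ V) → x = 1 := by
  classical
  set φ := extChartAt I (1 : Q) with hφ
  set c : E := φ 1 with hc
  have hDcast : (E →L[ℝ] E) = (TangentSpace I (1:Q) →L[ℝ] TangentSpace I ((1:Q) * 1)) := rfl
  set D : E →L[ℝ] E := mfderiv I I (fun x : Q => x * x) 1 with hD
  -- differentiability of squaring
  have hmul : MDifferentiableAt (I.prod I) I (fun p : Q × Q => p.1 * p.2) (1, 1) :=
    (contMDiff_mul I ((⊤ : ℕ∞) : WithTop ℕ∞)).mdifferentiableAt (by simp)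
  have hdiag : MDifferentiableAt I (I.prod I) (fun x : Q => (x, x)) 1 :=
    mdifferentiableAt_id.prodMk mdifferentiableAt_id
  have hsq : MDifferentiableAt I I (fun x : Q => x * x) 1 :=
    MDifferentiableAt.comp (g := fun p : Q × Q => p.1 * p.2) (f := fun x : Q => (x, x))
      1 hmul hdiag
  have hval : ∀ v : E, D v = v + v := by
    have hcomp : mfderiv I I (fun x : Q => x * x) 1 =
        (mfderiv (I.prod I) I (fun p : Q × Q => p.1 * p.2) (1,1)).comp
          (mfderiv I (I.prod I) (fun x : Q => (x, x)) 1) :=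
      mfderiv_comp (g := fun p : Q × Q => p.1 * p.2) (f := fun x : Q => (x, x)) 1 hmul hdiag
    have hd : mfderiv I (I.prod I) (fun x : Q => (x, x)) 1 =
        (mfderiv I I (fun x : Q => x) 1).prod (mfderiv I I (fun x : Q => x) 1) :=
      mdifferentiableAt_id.mfderiv_prod mdifferentiableAt_id
    have hadd := mfderiv_prod_eq_add_comp hmul
    have h1 : (fun z : Q => z * (1:Q)) = fun z => z := by funext z; exact mul_one z
    have h2 : (fun z : Q => (1:Q) * z) = fun z => z := by funext z; exact one_mul z
    rw [h1, h2] at hadd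
    intro v
    rw [hD, hcomp]
    simp only [ContinuousLinearMap.comp_apply, hd, hadd]
    rw [show (fun z : Q => z) = id from rfl, mfderiv_id]
    rfl
  have hnD : ∀ v : E, ‖D v‖ = 2 * ‖v‖ := by
    intro v
    rw [hval v, ← two_smul ℝ v, norm_smul]
    norm_num
  -- the written-in-chart map and its derivative estimate
  set F := writtenInExtChartAt I I 1 (fun x : Q => x * x) with hFdef
  have hF : HasFDerivWithinAt F D (range I) c := hsq.hasMFDerivAt.2
  have hFc : F c = c := by
    simp only [hFdef, writtenInExtChartAt, Function.comp_apply, hc]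
    rw [PartialEquiv.left_inv _ (mem_extChartAt_source (I := I) 1)]
    rw [show (1 : Q) * 1 = 1 from one_mul 1]
  have hbound := hF.isLittleO.bound (by norm_num : (0:ℝ) < 1/2)
  have htarget : φ.target ∈ 𝓝[range I] c := extChartAt_target_mem_nhdsWithin (I := I) 1
  have hev : {y : E | (‖F y - F c - D (y - c)‖ ≤ 1/2 * ‖y - c‖) ∧ y ∈ φ.target}
      ∈ 𝓝[range I] c := hbound.and htarget
  obtain ⟨t, hto, htc, hsub⟩ := mem_nhdsWithin.mp hev
  obtain ⟨r, hr, hball⟩ := Metric.isOpen_iff.mp hto c htc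
  -- the neighborhood
  refine ⟨φ.source ∩ φ ⁻¹' Metric.ball c r, Filter.inter_mem
    ((isOpen_extChartAt_source (I := I) 1).mem_nhds (mem_extChartAt_source (I := I) 1))
    ((continuousAt_extChartAt (I := I) 1).preimage_mem_nhds
      (by rw [← hc]; exact Metric.ball_mem_nhds c hr)), ?_⟩
  intro x hx
  by_contra hx1
  set y : ℕ → E := fun n => φ (x ^ 2 ^ n) with hy
  have hys : ∀ n, x ^ 2 ^ n ∈ φ.source := fun n => (hx n).1
  have hyb : ∀ n, y n ∈ Metric.ball c r := fun n => (hx n).2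
  have hyr : ∀ n, y n ∈ range I := fun n =>
    extChartAt_target_subset_range (I := I) 1 (φ.map_source (hys n))
  have hgood : ∀ n, ‖F (y n) - F c - D (y n - c)‖ ≤ 1/2 * ‖y n - c‖ :=
    fun n => (hsub ⟨hball (hyb n), hyr n⟩).1
  have hstep : ∀ n, F (y n) = y (n + 1) := by
    intro n
    have : F (y n) = φ (x ^ 2 ^ n * x ^ 2 ^ n) := by
      simp only [hFdef, writtenInExtChartAt, Function.comp_apply, hy]
      rw [PartialEquiv.left_inv _ (hys n)]
      rw [show (1 : Q) * 1 = 1 from one_mul 1]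
    rw [this, hy]
    congr 1
    rw [← pow_two, ← pow_mul, ← pow_succ]
  have hlow : ∀ n, (3/2 : ℝ) * ‖y n - c‖ ≤ ‖y (n+1) - c‖ := by
    intro n
    have h1 := hgood n
    have h3 := norm_sub_norm_le (D (y n - c)) (F (y n) - F c)
    rw [norm_sub_rev (D (y n - c))] at h3
    have key : (3/2 : ℝ) * ‖y n - c‖ ≤ ‖F (y n) - F c‖ := by
      have h4 := hnD (y n - c)
      linarith
    rwa [hstep n, hFc] at key
  have hgrow : ∀ n, (3/2 : ℝ)^n * ‖y 0 - c‖ ≤ ‖y n - c‖ := by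
    intro n
    induction n with
    | zero => simp
    | succ n ih =>
      calc (3/2:ℝ)^(n+1) * ‖y 0 - c‖ = 3/2 * ((3/2:ℝ)^n * ‖y 0 - c‖) := by ring
      _ ≤ 3/2 * ‖y n - c‖ := by
          exact mul_le_mul_of_nonneg_left ih (by norm_num)
      _ ≤ ‖y (n+1) - c‖ := hlow n
  have hpos : 0 < ‖y 0 - c‖ := by
    rw [norm_pos_iff, sub_ne_zero]
    intro heq
    apply hx1
    have hinj : x ^ 2 ^ 0 = 1 := φ.injOn (hys 0) (mem_extChartAt_source (I := I) 1) heq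
    simpa using hinj
  obtain ⟨n, hn⟩ := pow_unbounded_of_one_lt (r / ‖y 0 - c‖) (by norm_num : (1:ℝ) < 3/2)
  have hlt : ‖y n - c‖ < r := by
    have := hyb n
    rwa [Metric.mem_ball, dist_eq_norm] at this
  rw [div_lt_iff₀ hpos] at hn
  linarith [hgrow n]

private theorem aux_commensurable {G : Type*} [Group G] [TopologicalSpace G] [IsTopologicalGroup G]
    (K L : Subgroup G)
    (hLc : IsCompact (L : Set G)) (hLtd : TotallyDisconnectedSpace L)
    (hKn : IsOpen ((Subgroup.normalizer (K : Set G)) : Set G))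
    {E H : Type*} [NormedAddCommGroup E] [NormedSpace ℝ E] [TopologicalSpace H]
    (I : ModelWithCorners ℝ E H)
    [ChartedSpace H ((Subgroup.normalizer (K : Set G)) ⧸ K.subgroupOf (Subgroup.normalizer (K : Set G)))]
    [LieGroup I (⊤ : ℕ∞) ((Subgroup.normalizer (K : Set G)) ⧸ K.subgroupOf (Subgroup.normalizer (K : Set G)))] :
    ((K ⊓ L).subgroupOf L).FiniteIndex := by
  classical
  haveI : CompactSpace L := isCompact_iff_compactSpace.mp hLc
  -- Second factor: (Subgroup.normalizer (K : Set G)) ⊓ L has finite index in L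
  have h2 : ((Subgroup.normalizer (K : Set G)) ⊓ L).relIndex L ≠ 0 := by
    rw [Subgroup.relIndex, Subgroup.inf_subgroupOf_right]
    have hopen : IsOpen ((((Subgroup.normalizer (K : Set G))).subgroupOf L : Subgroup L) : Set L) := by
      have : ((((Subgroup.normalizer (K : Set G))).subgroupOf L : Subgroup L) : Set L) = (Subtype.val : L → G) ⁻¹' (Subgroup.normalizer (K : Set G)) := rfl
      rw [this]
      exact hKn.preimage continuous_subtype_val
    haveI := Subgroup.quotient_finite_of_isOpen (((Subgroup.normalizer (K : Set G))).subgroupOf L) hopen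
    exact Subgroup.index_ne_zero_of_finite
  -- First factor: K ⊓ L has finite index in (Subgroup.normalizer (K : Set G)) ⊓ L
  have h1 : (K ⊓ L).relIndex ((Subgroup.normalizer (K : Set G)) ⊓ L) ≠ 0 := by
    set P := (Subgroup.normalizer (K : Set G)) ⊓ L with hP
    haveI : CompactSpace P := by
      have hcpt : IsCompact ((P : Set G)) := by
        rw [hP, Subgroup.coe_inf]
        exact IsCompact.inter_left hLc (((Subgroup.normalizer (K : Set G))).isClosed_of_isOpen hKn)
      exact isCompact_iff_compactSpace.mp hcpt
    haveI : TotallyDisconnectedSpace P := by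
      have hL : IsTotallyDisconnected (L : Set G) :=
        totallyDisconnectedSpace_subtype_iff.mp hLtd
      have : TotallyDisconnectedSpace ((P : Set G)) := by
        rw [totallyDisconnectedSpace_subtype_iff]
        intro t hts ht
        exact hL t (hts.trans (by rw [hP, Subgroup.coe_inf]; exact inter_subset_right)) ht
      exact this
    -- the homomorphism into the Lie group quotient
    set ψ : P →* (Subgroup.normalizer (K : Set G)) ⧸ K.subgroupOf (Subgroup.normalizer (K : Set G)) :=
      (QuotientGroup.mk' (K.subgroupOf (Subgroup.normalizer (K : Set G)))).comp
        (Subgroup.inclusion (inf_le_left : P ≤ (Subgroup.normalizer (K : Set G)))) with hψ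
    have hψc : Continuous ψ := by
      have hinc : Continuous (Subgroup.inclusion (inf_le_left : P ≤ (Subgroup.normalizer (K : Set G))) : P → (Subgroup.normalizer (K : Set G))) :=
        continuous_induced_rng.mpr continuous_subtype_val
      exact continuous_quotient_mk'.comp hinc
    obtain ⟨V, hV, hVone⟩ := LieGroup.exists_nhds_pow_two_pow (Q := (Subgroup.normalizer (K : Set G)) ⧸ K.subgroupOf (Subgroup.normalizer (K : Set G))) I
    have hpre : ψ ⁻¹' V ∈ 𝓝 (1 : P) := by
      apply hψc.continuousAt.preimage_mem_nhds
      rw [map_one]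
      exact hV
    obtain ⟨U, hUsub, hUopen, hU1⟩ := mem_nhds_iff.mp hpre
    obtain ⟨W, hWclopen, hW1, hWsub⟩ := compact_exists_isClopen_in_isOpen hUopen hU1
    obtain ⟨O, hO⟩ := IsTopologicalGroup.exist_openSubgroup_sub_clopen_nhds_of_one hWclopen hW1
    have hOle : O.toSubgroup ≤ (K ⊓ L).subgroupOf P := by
      intro p hp
      have hψp : ψ p = 1 := by
        apply hVone
        intro n
        rw [← map_pow]
        exact hUsub (hWsub (hO (pow_mem hp (2 ^ n))))
      rw [Subgroup.mem_subgroupOf]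
      refine ⟨?_, p.2.2⟩
      have := (QuotientGroup.eq_one_iff _).mp hψp
      rwa [Subgroup.mem_subgroupOf, Subgroup.coe_inclusion] at this
    have hOfin : O.toSubgroup.index ≠ 0 := by
      haveI := Subgroup.quotient_finite_of_isOpen O.toSubgroup O.isOpen
      exact Subgroup.index_ne_zero_of_finite
    have hdvd := Subgroup.index_dvd_of_le hOle
    rw [Subgroup.relIndex]
    intro h0
    rw [h0, zero_dvd_iff] at hdvd
    exact hOfin hdvd
  have := Subgroup.relIndex_mul_relIndex (K ⊓ L) ((Subgroup.normalizer (K : Set G)) ⊓ L) L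
    (inf_le_inf_right L Subgroup.le_normalizer) inf_le_right
  refine ⟨?_⟩
  show (K ⊓ L).relIndex L ≠ 0
  rw [← this]
  exact Nat.mul_ne_zero h1 h2

/-- Two basic compact subgroups of a moderate locally compact group are commensurable:
if `K, L ≤ G` are compact totally disconnected subgroups whose normalizers are open and
such that each quotient (normalizer of the subgroup modulo the subgroup) is a real
Lie group, then `K ∩ L` has finite index in both `K` and `L`. -/
theorem stmt7 {G : Type*} [Group G] [TopologicalSpace G] [IsTopologicalGroup G]
    [LocallyCompactSpace G]
    (K L : Subgroup G)
    (hKc : IsCompact (K : Set G)) (hLc : IsCompact (L : Set G))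
    (hKtd : TotallyDisconnectedSpace K) (hLtd : TotallyDisconnectedSpace L)
    (hKn : IsOpen ((Subgroup.normalizer (K : Set G)) : Set G)) (hLn : IsOpen ((Subgroup.normalizer (L : Set G)) : Set G))
    {E₁ H₁ : Type*} [NormedAddCommGroup E₁] [NormedSpace ℝ E₁] [TopologicalSpace H₁]
    (I₁ : ModelWithCorners ℝ E₁ H₁)
    [ChartedSpace H₁ ((Subgroup.normalizer (K : Set G)) ⧸ K.subgroupOf (Subgroup.normalizer (K : Set G)))]
    [LieGroup I₁ (⊤ : ℕ∞) ((Subgroup.normalizer (K : Set G)) ⧸ K.subgroupOf (Subgroup.normalizer (K : Set G)))]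
    {E₂ H₂ : Type*} [NormedAddCommGroup E₂] [NormedSpace ℝ E₂] [TopologicalSpace H₂]
    (I₂ : ModelWithCorners ℝ E₂ H₂)
    [ChartedSpace H₂ ((Subgroup.normalizer (L : Set G)) ⧸ L.subgroupOf (Subgroup.normalizer (L : Set G)))]
    [LieGroup I₂ (⊤ : ℕ∞) ((Subgroup.normalizer (L : Set G)) ⧸ L.subgroupOf (Subgroup.normalizer (L : Set G)))] :
    ((K ⊓ L).subgroupOf K).FiniteIndex ∧ ((K ⊓ L).subgroupOf L).FiniteIndex := by
  refine ⟨?_, aux_commensurable K L hLc hLtd hKn I₁⟩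
  rw [inf_comm]
  exact aux_commensurable L K hKc hKtd hLn I₂
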